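/- Let θ(t) be a solution of the spin-orbit equation satisfying the Dirichlet conditions θ(α) = β and θ(α + nπ) = β + mπ, for integers m, n with n ≠ 0, α ∈ {0, π}, β ∈ {0, π/2}. Then θ is in an m:n spin-orbit resonance, i.e., θ(t + 2πn) = θ(t) + 2πm for all t. -/

import Mathlib

open Real

private lemma sin_lip' (x y : ℝ) : |Real.sin x - Real.sin y| ≤ |x - y| := by
  rw [Real.sin_sub_sin]
  have h1 : |Real.sin ((x - y) / 2)| ≤ |(x - y) / 2| := Real.abs_sin_le_abs
  have h2 : |Real.cos ((x + y) / 2)| ≤ 1 := Real.abs_cos_le_one _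
  calc |2 * Real.sin ((x - y) / 2) * Real.cos ((x + y) / 2)|
      = 2 * |Real.sin ((x - y) / 2)| * |Real.cos ((x + y) / 2)| := by
        rw [abs_mul, abs_mul]; simp
    _ ≤ 2 * |(x - y) / 2| * 1 := by
        apply mul_le_mul _ h2 (abs_nonneg _) (by positivity)
        exact mul_le_mul_of_nonneg_left h1 (by norm_num)
    _ = |x - y| := by rw [abs_div, abs_two]; ring

/-- Global uniqueness for ODEs with globally Lipschitz RHS. -/
private lemma myUnique {E : Type*} [NormedAddCommGroup E] [NormedSpace ℝ E]
    {v : ℝ → E → E} {K : NNReal} (hv : ∀ t, LipschitzWith K (v t))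
    {F G : ℝ → E} {t₀ : ℝ}
    (hF : ∀ t, HasDerivAt F (v t (F t)) t) (hG : ∀ t, HasDerivAt G (v t (G t)) t)
    (heq : F t₀ = G t₀) : ∀ t, F t = G t := by
  intro t
  have hmem : t₀ ∈ Set.Ioo (min t t₀ - 1) (max t t₀ + 1) :=
    ⟨by have := min_le_right t t₀; linarith, by have := le_max_right t t₀; linarith⟩
  have := ODE_solution_unique_of_mem_Icc (s := fun _ => Set.univ)
    (fun t _ => (hv t).lipschitzOnWith) hmem
    (fun s _ => (hF s).continuousAt.continuousWithinAt)
    (fun s _ => hF s) (fun _ _ => trivial)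
    (fun s _ => (hG s).continuousAt.continuousWithinAt)
    (fun s _ => hG s) (fun _ _ => trivial) heq
  exact this ⟨by have := min_le_left t t₀; linarith, by have := le_max_left t t₀; linarith⟩

/-- Reflection principle for the spin-orbit ODE: if the coefficient and `f` are symmetric
about `α'`, and `θ α' = β'` with `4β' - 4α'` a multiple of `2π`, then the solution is
symmetric: `θ t + θ (2α' - t) = 2β'`. -/
private lemma reflect (C f : ℝ → ℝ) (M : ℝ) (hM : ∀ t, |C t| ≤ M)
    (θ θ' θ'' : ℝ → ℝ)
    (hd1 : ∀ t, HasDerivAt θ (θ' t) t) (hd2 : ∀ t, HasDerivAt θ' (θ'' t) t)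
    (hode : ∀ t, θ'' t = - (C t * Real.sin (2 * θ t - 2 * f t)))
    (α' β' : ℝ) (hCsym : ∀ t, C (2 * α' - t) = C t)
    (hfsym : ∀ t, f (2 * α' - t) = 2 * α' - f t)
    (hk : ∃ k : ℤ, 4 * β' - 4 * α' = k * (2 * π)) (hbc : θ α' = β') :
    ∀ t, θ t + θ (2 * α' - t) = 2 * β' := by
  have hM0 : 0 ≤ M := le_trans (abs_nonneg _) (hM 0)
  set v : ℝ → ℝ × ℝ → ℝ × ℝ :=
    fun t p => (p.2, - (C t * Real.sin (2 * p.1 - 2 * f t))) with hv_def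
  have hK : (0:ℝ) ≤ 1 + 2 * M := by linarith
  set K : NNReal := Real.toNNReal (1 + 2 * M) with hK_def
  have hKcoe : (K : ℝ) = 1 + 2 * M := Real.coe_toNNReal _ hK
  have hv : ∀ t, LipschitzWith K (v t) := by
    intro t
    apply LipschitzWith.of_dist_le_mul
    intro p q
    rw [Prod.dist_eq]
    have h1 : dist p.1 q.1 ≤ dist p q := by rw [Prod.dist_eq]; exact le_max_left _ _
    have h2 : dist p.2 q.2 ≤ dist p q := by rw [Prod.dist_eq]; exact le_max_right _ _
    have hd0 : (0:ℝ) ≤ dist p q := dist_nonneg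
    apply max_le
    · calc dist (v t p).1 (v t q).1 = dist p.2 q.2 := rfl
        _ ≤ dist p q := h2
        _ ≤ (1 + 2 * M) * dist p q := by nlinarith
        _ = K * dist p q := by rw [hKcoe]
    · have hs : dist (v t p).2 (v t q).2
          = |C t| * |Real.sin (2 * p.1 - 2 * f t) - Real.sin (2 * q.1 - 2 * f t)| := by
        have hsub : (v t p).2 - (v t q).2
            = -(C t * (Real.sin (2 * p.1 - 2 * f t) - Real.sin (2 * q.1 - 2 * f t))) := by
          simp only [hv_def]; ring
        rw [Real.dist_eq, hsub, abs_neg, abs_mul]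
      have hsin : |Real.sin (2 * p.1 - 2 * f t) - Real.sin (2 * q.1 - 2 * f t)|
          ≤ 2 * dist p.1 q.1 := by
        refine le_trans (sin_lip' _ _) ?_
        rw [Real.dist_eq]
        rw [show 2 * p.1 - 2 * f t - (2 * q.1 - 2 * f t) = 2 * (p.1 - q.1) by ring,
          abs_mul]
        simp [abs_of_nonneg]
      calc dist (v t p).2 (v t q).2
          = |C t| * |Real.sin (2 * p.1 - 2 * f t) - Real.sin (2 * q.1 - 2 * f t)| := hs
        _ ≤ M * (2 * dist p.1 q.1) := by
            apply mul_le_mul (hM t) hsin (abs_nonneg _) hM0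
        _ ≤ (1 + 2 * M) * dist p q := by nlinarith [dist_nonneg (x := p.1) (y := q.1)]
        _ = K * dist p q := by rw [hKcoe]
  set F : ℝ → ℝ × ℝ := fun t => (θ t, θ' t) with hF_def
  set G : ℝ → ℝ × ℝ := fun t => (2 * β' - θ (2 * α' - t), θ' (2 * α' - t)) with hG_def
  have hF : ∀ t, HasDerivAt F (v t (F t)) t := by
    intro t
    have : HasDerivAt F (θ' t, θ'' t) t := (hd1 t).prodMk (hd2 t)
    convert this using 1
    simp only [hv_def, hF_def]
    rw [hode t]
  have hG : ∀ t, HasDerivAt G (v t (G t)) t := by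
    intro t
    have hi : HasDerivAt (fun s : ℝ => 2 * α' - s) (-1) t := by
      simpa using (hasDerivAt_id t).const_sub (2 * α')
    have h1 : HasDerivAt (fun s : ℝ => θ (2 * α' - s)) (θ' (2 * α' - t) * (-1)) t :=
      (hd1 (2 * α' - t)).comp t hi
    have h2 : HasDerivAt (fun s : ℝ => θ' (2 * α' - s)) (θ'' (2 * α' - t) * (-1)) t :=
      (hd2 (2 * α' - t)).comp t hi
    have h1' : HasDerivAt (fun s : ℝ => 2 * β' - θ (2 * α' - s)) (θ' (2 * α' - t)) t := by
      simpa using h1.const_sub (2 * β')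
    have hGd : HasDerivAt G (θ' (2 * α' - t), - θ'' (2 * α' - t)) t := by
      have := h1'.prodMk h2
      simpa using this
    convert hGd using 1
    have hft : f t = 2 * α' - f (2 * α' - t) := by rw [hfsym t]; ring
    have hCt : C t = C (2 * α' - t) := (hCsym t).symm
    simp only [hv_def, hG_def]
    refine Prod.ext rfl ?_
    simp only
    obtain ⟨k, hk⟩ := hk
    rw [hft, hCt, hode (2 * α' - t)]
    rw [show 2 * (2 * β' - θ (2 * α' - t)) - 2 * (2 * α' - f (2 * α' - t))
        = -(2 * θ (2 * α' - t) - 2 * f (2 * α' - t)) + (4 * β' - 4 * α') by ring, hk]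
    rw [Real.sin_add_int_mul_two_pi, Real.sin_neg]
    ring
  have heq : F α' = G α' := by
    simp only [hF_def, hG_def]
    rw [show 2 * α' - α' = α' by ring, hbc]
    refine Prod.ext ?_ rfl
    simp; ring
  have := myUnique hv hF hG heq
  intro t
  have ht := congrArg Prod.fst (this t)
  simp only [hF_def, hG_def] at ht
  linarith [ht]

/-- Dirichlet conditions θ(α) = β, θ(α + nπ) = β + mπ for a symmetric solution of the
spin-orbit equation imply the m:n spin-orbit resonance θ(t + 2πn) = θ(t) + 2πm. -/
theorem stmt_9 (e a lam α β : ℝ) (he0 : 0 ≤ e) (he1 : e < 1) (ha : 0 < a)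
    (m n : ℤ) (hn : n ≠ 0)
    (hα : α = 0 ∨ α = π) (hβ : β = 0 ∨ β = π / 2)
    (r f : ℝ → ℝ) (hrc : Continuous r) (hfc : Continuous f) (hrpos : ∀ t, 0 < r t)
    (hrper : ∀ t, r (t + 2 * π) = r t)
    (hfper : ∀ t, f (t + 2 * π) = f t + 2 * π)
    (hrsym : ∀ t, r (2 * α - t) = r t)
    (hfsym : ∀ t, f (2 * α - t) = 2 * α - f t)
    (θ θ' θ'' : ℝ → ℝ)
    (hd1 : ∀ t, HasDerivAt θ (θ' t) t)
    (hd2 : ∀ t, HasDerivAt θ' (θ'' t) t)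
    (hode : ∀ t, θ'' t + (lam / 2) * (a / r t) ^ 3 * Real.sin (2 * θ t - 2 * f t) = 0)
    (hbc1 : θ α = β) (hbc2 : θ (α + n * π) = β + m * π) :
    ∀ t, θ (t + 2 * π * n) = θ t + 2 * π * m := by
  -- the coefficient function
  set C : ℝ → ℝ := fun t => (lam / 2) * (a / r t) ^ 3 with hC_def
  have hCc : Continuous C := by
    apply Continuous.mul continuous_const
    exact (continuous_const.div hrc (fun t => (hrpos t).ne')).pow 3
  have hCper : Function.Periodic C (2 * π) := fun t => by simp only [hC_def, hrper t]
  -- a global bound on |C|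
  obtain ⟨M, hMb⟩ := (isCompact_Icc (a := (0:ℝ)) (b := 2 * π)).exists_bound_of_continuousOn
    hCc.continuousOn
  have hM : ∀ t, |C t| ≤ M := by
    intro t
    obtain ⟨y, hy, hCy⟩ := hCper.exists_mem_Ico₀ Real.two_pi_pos t
    rw [hCy]
    exact hMb y (Set.mem_Icc_of_Ico hy)
  -- ODE in the reflect form
  have hode' : ∀ t, θ'' t = - (C t * Real.sin (2 * θ t - 2 * f t)) := by
    intro t; have := hode t; simp only [hC_def]; linarith
  -- integer-periodicity of r and f
  have hrperZ : ∀ (k : ℤ) (t : ℝ), r (t + 2 * π * k) = r t := by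
    intro k
    have hp : Function.Periodic r (2 * π) := hrper
    intro t
    have := (hp.int_mul k) t
    rw [show t + 2 * π * k = t + k * (2 * π) by ring]
    exact this
  have hfperZ : ∀ (k : ℤ) (t : ℝ), f (t + 2 * π * k) = f t + 2 * π * k := by
    have hg : Function.Periodic (fun t => f t - t) (2 * π) := by
      intro t; simp only; rw [hfper t]; ring
    intro k t
    have := (hg.int_mul k) t
    rw [show t + 2 * π * k = t + k * (2 * π) by ring] at *
    linarith [this]
  -- symmetry of C about α
  have hCsym : ∀ t, C (2 * α - t) = C t := fun t => by simp only [hC_def, hrsym t]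
  -- symmetry about α' := α + nπ
  set α' : ℝ := α + n * π with hα'_def
  set β' : ℝ := β + m * π with hβ'_def
  have h2α' : ∀ t : ℝ, 2 * α' - t = (2 * α - t) + 2 * π * n := fun t => by
    simp only [hα'_def]; ring
  have hCsym' : ∀ t, C (2 * α' - t) = C t := by
    intro t
    simp only [hC_def]
    rw [h2α' t, hrperZ n (2 * α - t), hrsym t]
  have hfsym' : ∀ t, f (2 * α' - t) = 2 * α' - f t := by
    intro t
    rw [h2α' t, hfperZ n (2 * α - t), hfsym t, hα'_def]
    ring
  -- angle conditions
  have hk1 : ∃ k : ℤ, 4 * β - 4 * α = k * (2 * π) := by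
    rcases hα with h1 | h1 <;> rcases hβ with h2 | h2 <;> subst h1 <;> subst h2
    · exact ⟨0, by ring⟩
    · exact ⟨1, by ring⟩
    · exact ⟨-2, by push_cast; ring⟩
    · exact ⟨-1, by push_cast; ring⟩
  have hk2 : ∃ k : ℤ, 4 * β' - 4 * α' = k * (2 * π) := by
    obtain ⟨k, hk⟩ := hk1
    exact ⟨k + 2 * m - 2 * n, by push_cast; simp only [hβ'_def, hα'_def]; push_cast; linarith⟩
  -- two reflection identities
  have rel1 := reflect C f M hM θ θ' θ'' hd1 hd2 hode' α β hCsym hfsym hk1 hbc1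
  have rel2 := reflect C f M hM θ θ' θ'' hd1 hd2 hode' α' β' hCsym' hfsym' hk2 hbc2
  -- combine
  intro t
  have h1 := rel1 t
  have h2 := rel2 (2 * α - t)
  have harg : 2 * α' - (2 * α - t) = t + 2 * π * n := by simp only [hα'_def]; ring
  rw [harg] at h2
  have : (2:ℝ) * β' = 2 * β + 2 * π * m := by simp only [hβ'_def]; ring
  linarith
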